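/- Let k ≠ k′ be two arms with E[μ̂_k(n)] ≤ E[μ̂_{k′}(n)] − Δ for all n ∈ Λ, where Δ > 0, and suppose there exist random sets Λ(s) with Λ ⊆ ∪_s Λ(s), |Λ(s)| ≤ 1, and t_k(n) ≥ εs and t_{k′}(n) ≥ εs for n ∈ Λ(s), with n ∈ Λ(s) measurable with respect to the history up to n. Then E[Σ_{n≥1} 1{n ∈ Λ, μ̂_k(n) > μ̂_{k′}(n)}] ≤ 8/(εΔ²). -/

import Mathlib

open MeasureTheory ProbabilityTheory Real
open scoped Classical ENNReal

lemma exp_le_quad {x : ℝ} (hx : |x| ≤ 1) : Real.exp x ≤ 1 + x + x ^ 2 := by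
  have h := Real.exp_bound hx (n := 2) (by norm_num)
  have hs : ∑ i ∈ Finset.range 2, x ^ i / i.factorial = 1 + x := by
    simp [Finset.sum_range_succ]
  rw [hs] at h
  have h2 : Real.exp x - (1 + x) ≤ |x| ^ 2 * (3 / (2 * 2)) := by
    have := abs_le.1 h
    norm_num [Nat.factorial] at this; rw [sq_abs]; linarith [this.2]
  have : |x| ^ 2 * (3 / (2 * 2)) ≤ x ^ 2 := by
    rw [sq_abs]; nlinarith [sq_nonneg x]
  linarith

lemma integrable_of_bdd {Ω : Type*} {mΩ : MeasurableSpace Ω} {P : Measure Ω}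
    [IsFiniteMeasure P] {f : Ω → ℝ} (hm : Measurable f) {C : ℝ} (h : ∀ ω, |f ω| ≤ C) :
    Integrable f P :=
  ⟨hm.aestronglyMeasurable, HasFiniteIntegral.of_bounded (C := C) (ae_of_all _ h)⟩

lemma indep_mono {Ω : Type*} {mΩ : MeasurableSpace Ω} {P : Measure Ω}
    {m1 m2 m1' m2' : MeasurableSpace Ω}
    (h : Indep m1 m2 P) (h1 : m1' ≤ m1) (h2 : m2' ≤ m2) : Indep m1' m2' P :=
  fun t1 t2 ht1 ht2 => h t1 t2 (h1 _ ht1) (h2 _ ht2)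

-- mgf bound
lemma mgf_quarter {Ω : Type*} {mΩ : MeasurableSpace Ω} (P : Measure Ω) [IsProbabilityMeasure P]
    (Y : Ω → ℝ) (hYm : Measurable Y) (hYb : ∀ ω, Y ω ∈ Set.Icc (0:ℝ) 1)
    (ν l : ℝ) (hν : ∫ ω, Y ω ∂P = ν) (hl0 : 0 ≤ l) (hl1 : l ≤ 1) :
    ∫ ω, Real.exp (l * (Y ω - ν)) ∂P ≤ 1 + l ^ 2 / 4 := by
  have hν0 : 0 ≤ ν := hν ▸ integral_nonneg fun ω => (hYb ω).1
  have hν1 : ν ≤ 1 := by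
    rw [← hν]
    calc ∫ ω, Y ω ∂P ≤ ∫ _ω, (1:ℝ) ∂P := by
          refine integral_mono (integrable_of_bdd hYm (C := 1) ?_) (integrable_const 1)
            (fun ω => (hYb ω).2)
          intro ω; rw [abs_le]; exact ⟨by linarith [(hYb ω).1], (hYb ω).2⟩
      _ = 1 := by simp
  have hb : ∀ ω, |Y ω - ν| ≤ 1 := by
    intro ω; rw [abs_le]; constructor <;> [linarith [(hYb ω).1]; linarith [(hYb ω).2]]
  have hYint : Integrable Y P := integrable_of_bdd hYm (C := 1)
    (fun ω => by rw [abs_le]; exact ⟨by linarith [(hYb ω).1], (hYb ω).2⟩)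
  have hY2int : Integrable (fun ω => (Y ω - ν) ^ 2) P :=
    integrable_of_bdd (by fun_prop) (C := 1) (fun ω => by
      rw [abs_le]; constructor
      · nlinarith [sq_nonneg (Y ω - ν)]
      · nlinarith [hb ω, abs_nonneg (Y ω - ν), sq_abs (Y ω - ν), (abs_le.1 (hb ω)).1,
          (abs_le.1 (hb ω)).2])
  have hpt : ∀ ω, Real.exp (l * (Y ω - ν)) ≤ 1 + l * (Y ω - ν) + l ^ 2 * (Y ω - ν) ^ 2 := by
    intro ω
    have habs : |l * (Y ω - ν)| ≤ 1 := by
      rw [abs_mul, abs_of_nonneg hl0]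
      calc l * |Y ω - ν| ≤ 1 * 1 := by
            apply mul_le_mul hl1 (hb ω) (abs_nonneg _) zero_le_one
        _ = 1 := by ring
    calc Real.exp (l * (Y ω - ν)) ≤ 1 + l * (Y ω - ν) + (l * (Y ω - ν)) ^ 2 := exp_le_quad habs
      _ = 1 + l * (Y ω - ν) + l ^ 2 * (Y ω - ν) ^ 2 := by ring
  have hint1 : Integrable (fun ω => 1 + l * (Y ω - ν) + l ^ 2 * (Y ω - ν) ^ 2) P := by
    apply Integrable.add
    · exact (integrable_const 1).add ((hYint.sub (integrable_const ν)).const_mul l)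
    · exact hY2int.const_mul _
  have hexpint : Integrable (fun ω => Real.exp (l * (Y ω - ν))) P := by
    refine integrable_of_bdd (by fun_prop) (C := Real.exp 1) (fun ω => ?_)
    rw [abs_of_pos (Real.exp_pos _)]
    apply Real.exp_le_exp.2
    have habs : |l * (Y ω - ν)| ≤ 1 := by
      rw [abs_mul, abs_of_nonneg hl0]
      calc l * |Y ω - ν| ≤ 1 * 1 :=
            mul_le_mul hl1 (hb ω) (abs_nonneg _) zero_le_one
        _ = 1 := by ring
    exact (abs_le.1 habs).2
  have hY2int' : Integrable (fun ω => Y ω ^ 2) P :=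
    integrable_of_bdd (by fun_prop) (C := 1) (fun ω => by
      rw [abs_le]; constructor
      · nlinarith [sq_nonneg (Y ω)]
      · nlinarith [(hYb ω).1, (hYb ω).2])
  have ha1 : Integrable (fun ω => Y ω ^ 2 - 2 * ν * Y ω) P := hY2int'.sub (hYint.const_mul _)
  have e1 : ∫ ω, (Y ω - ν) ^ 2 ∂P = (∫ ω, Y ω ^ 2 ∂P) - ν ^ 2 := by
    have h : ∀ ω, (Y ω - ν) ^ 2 = Y ω ^ 2 - 2 * ν * Y ω + ν ^ 2 := fun ω => by ring
    simp_rw [h]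
    rw [integral_add ha1 (integrable_const _), integral_sub hY2int' (hYint.const_mul (2 * ν)),
      integral_const_mul, hν, integral_const]
    simp; ring
  have e2 : ∫ ω, (Y ω - ν) ^ 2 ∂P ≤ 1 / 4 := by
    rw [e1]
    have hle : ∫ ω, Y ω ^ 2 ∂P ≤ ν := by
      rw [← hν]
      refine integral_mono hY2int' hYint (fun ω => ?_)
      nlinarith [(hYb ω).1, (hYb ω).2]
    nlinarith [sq_nonneg (2 * ν - 1)]
  have ha2 : Integrable (fun ω => l * (Y ω - ν)) P := (hYint.sub (integrable_const ν)).const_mul l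
  have ha3 : Integrable (fun ω => 1 + l * (Y ω - ν)) P := (integrable_const 1).add ha2
  have ha4 : Integrable (fun ω => l ^ 2 * (Y ω - ν) ^ 2) P := hY2int.const_mul _
  have e0 : ∫ ω, (1 + l * (Y ω - ν) + l ^ 2 * (Y ω - ν) ^ 2) ∂P
      = 1 + l ^ 2 * ∫ ω, (Y ω - ν) ^ 2 ∂P := by
    rw [integral_add ha3 ha4, integral_add (integrable_const 1) ha2, integral_const,
      integral_const_mul, integral_const_mul, integral_sub hYint (integrable_const ν),
      integral_const, hν]
    simp
  calc ∫ ω, Real.exp (l * (Y ω - ν)) ∂P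
      ≤ ∫ ω, (1 + l * (Y ω - ν) + l ^ 2 * (Y ω - ν) ^ 2) ∂P :=
        integral_mono hexpint hint1 hpt
    _ = 1 + l ^ 2 * ∫ ω, (Y ω - ν) ^ 2 ∂P := e0
    _ ≤ 1 + l ^ 2 / 4 := by nlinarith [sq_nonneg l]

lemma key_dev {Ω : Type*} {mΩ : MeasurableSpace Ω} (P : Measure Ω) [IsProbabilityMeasure P]
    (G : MeasureTheory.Filtration ℕ mΩ)
    (Y : ℕ → Ω → ℝ) (hYad : ∀ t, Measurable[G t] (Y t)) (hYb : ∀ t ω, Y t ω ∈ Set.Icc (0:ℝ) 1)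
    (ν : ℝ) (hν : ∀ t, ∫ ω, Y t ω ∂P = ν)
    (hYind : ∀ N : ℕ, Indep (G N) (MeasurableSpace.comap (Y (N+1)) inferInstance) P)
    (B : ℕ → Ω → ℝ) (hB01 : ∀ t ω, B t ω = 0 ∨ B t ω = 1)
    (hBm : ∀ t, Measurable[G (t-1)] (B t))
    (δ : ℝ) (hδ : 0 < δ) (hδ1 : 2 * δ ≤ 1)
    (A : ℕ → Set Ω) (hA : ∀ n, MeasurableSet[G n] (A n))
    (hdisj : ∀ ⦃n m : ℕ⦄, n ≠ m → Disjoint (A n) (A m))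
    (m : ℝ)
    (hT : ∀ n, ∀ ω ∈ A n, m ≤ ∑ t ∈ Finset.Icc 1 n, B t ω) :
    ∑' n : ℕ, P (A n ∩ {ω | δ * ∑ t ∈ Finset.Icc 1 n, B t ω
        ≤ ∑ t ∈ Finset.Icc 1 n, B t ω * (Y t ω - ν)})
      ≤ ENNReal.ofReal (Real.exp (-(δ ^ 2) * m)) := by
  -- notation
  set S : ℕ → Ω → ℝ := fun n ω => ∑ t ∈ Finset.Icc 1 n, B t ω * (Y t ω - ν) with hS
  set T : ℕ → Ω → ℝ := fun n ω => ∑ t ∈ Finset.Icc 1 n, B t ω with hTdef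
  set M : ℕ → Ω → ℝ := fun n ω => Real.exp (2 * δ * S n ω - δ ^ 2 * T n ω) with hM
  -- basic bounds
  have hν0 : 0 ≤ ν := (hν 0) ▸ integral_nonneg fun ω => (hYb 0 ω).1
  have hν1 : ν ≤ 1 := by
    rw [← hν 0]
    calc ∫ ω, Y 0 ω ∂P ≤ ∫ _ω, (1:ℝ) ∂P := by
          refine integral_mono (integrable_of_bdd ((hYad 0).mono (G.le 0) le_rfl) (C := 1)
            fun ω => abs_le.2 ⟨by linarith [(hYb 0 ω).1], (hYb 0 ω).2⟩) (integrable_const 1)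
            fun ω => (hYb 0 ω).2
      _ = 1 := by simp
  have hB0 : ∀ t ω, 0 ≤ B t ω := fun t ω => by rcases hB01 t ω with h | h <;> rw [h] <;> norm_num
  have hB1 : ∀ t ω, B t ω ≤ 1 := fun t ω => by rcases hB01 t ω with h | h <;> rw [h] <;> norm_num
  have hBmΩ : ∀ t, Measurable (B t) := fun t => (hBm t).mono (G.le _) le_rfl
  have hYmΩ : ∀ t, Measurable (Y t) := fun t => (hYad t).mono (G.le _) le_rfl
  -- measurability of S, T, M w.r.t. G n
  have hSG : ∀ n, Measurable[G n] (S n) := by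
    intro n
    apply Finset.measurable_sum
    intro t ht
    obtain ⟨ht1, ht2⟩ := Finset.mem_Icc.1 ht
    have h1 : Measurable[G n] (B t) := (hBm t).mono (G.mono (by omega : t - 1 ≤ n)) le_rfl
    have h2 : Measurable[G n] (Y t) := (hYad t).mono (G.mono ht2) le_rfl
    exact h1.mul (h2.sub measurable_const)
  have hTG : ∀ n, Measurable[G n] (T n) := by
    intro n
    apply Finset.measurable_sum
    intro t ht
    obtain ⟨ht1, ht2⟩ := Finset.mem_Icc.1 ht
    exact (hBm t).mono (G.mono (by omega : t - 1 ≤ n)) le_rfl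
  have hMG : ∀ n, Measurable[G n] (M n) := by
    intro n
    exact Real.measurable_exp.comp ((((hSG n).const_mul (2*δ)).sub ((hTG n).const_mul (δ^2))))
  have hM0 : ∀ n ω, 0 ≤ M n ω := fun n ω => (Real.exp_pos _).le
  have hSb : ∀ n ω, |S n ω| ≤ n := by
    intro n ω
    calc |S n ω| ≤ ∑ t ∈ Finset.Icc 1 n, |B t ω * (Y t ω - ν)| := Finset.abs_sum_le_sum_abs _ _
      _ ≤ ∑ _t ∈ Finset.Icc 1 n, (1:ℝ) := by
          refine Finset.sum_le_sum fun t _ => ?_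
          rw [abs_mul, abs_of_nonneg (hB0 t ω)]
          have h1 : |Y t ω - ν| ≤ 1 :=
            abs_le.2 ⟨by linarith [(hYb t ω).1], by linarith [(hYb t ω).2]⟩
          calc B t ω * |Y t ω - ν| ≤ 1 * 1 :=
                mul_le_mul (hB1 t ω) h1 (abs_nonneg _) zero_le_one
            _ = 1 := by ring
      _ ≤ n := by simp [Nat.card_Icc]
  have hTb : ∀ n ω, 0 ≤ T n ω := fun n ω => Finset.sum_nonneg fun t _ => hB0 t ω
  have hMb : ∀ n ω, |M n ω| ≤ Real.exp (2 * δ * n) := by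
    intro n ω
    rw [abs_of_pos (Real.exp_pos _)]
    apply Real.exp_le_exp.2
    have h1 := (abs_le.1 (hSb n ω)).2
    have h2 := hTb n ω
    nlinarith [sq_nonneg δ]
  have hMint : ∀ n, Integrable (M n) P :=
    fun n => integrable_of_bdd ((hMG n).mono (G.le n) le_rfl) (hMb n)
  -- the single step inequality
  have step : ∀ (K : ℕ) (C : Set Ω), MeasurableSet[G K] C →
      ∫ ω, Set.indicator C (M (K+1)) ω ∂P ≤ ∫ ω, Set.indicator C (M K) ω ∂P := by
    intro K C hC
    have hCm : MeasurableSet C := G.le K _ hC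
    have hBK : Measurable[G K] (B (K+1)) := by simpa using hBm (K+1)
    set g : ℝ → ℝ := fun u => Real.exp (2 * δ * (u - ν) - δ ^ 2) - 1 with hg
    have hgm : Measurable g := by
      apply Measurable.sub _ measurable_const
      exact Real.measurable_exp.comp (((measurable_id.sub measurable_const).const_mul
        (2 * δ)).sub measurable_const)
    set φ : Ω → ℝ := fun ω => Set.indicator C (M K) ω * B (K+1) ω with hφ
    have hφG : Measurable[G K] φ := ((hMG K).indicator hC).mul hBK
    have hφm : Measurable φ := hφG.mono (G.le K) le_rfl
    set ψ : Ω → ℝ := fun ω => g (Y (K+1) ω) with hψ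
    have hψm : Measurable ψ := hgm.comp (hYmΩ (K+1))
    have hpt : ∀ ω, Set.indicator C (M (K+1)) ω = Set.indicator C (M K) ω + φ ω * ψ ω := by
      intro ω
      have h1 : S (K+1) ω = S K ω + B (K+1) ω * (Y (K+1) ω - ν) :=
        Finset.sum_Icc_succ_top (by omega) _
      have h2 : T (K+1) ω = T K ω + B (K+1) ω := Finset.sum_Icc_succ_top (by omega) _
      have hsum : M (K+1) ω
          = M K ω * Real.exp (2 * δ * (B (K+1) ω * (Y (K+1) ω - ν)) - δ ^ 2 * B (K+1) ω) := by
        simp only [hM]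
        rw [h1, h2, ← Real.exp_add]
        ring_nf
      by_cases hω : ω ∈ C
      · rw [Set.indicator_of_mem hω, Set.indicator_of_mem hω, hsum]
        simp only [hφ, hψ, hg, Set.indicator_of_mem hω]
        rcases hB01 (K+1) ω with h | h
        · rw [h]; simp
        · rw [h]; ring_nf
      · simp [Set.indicator_of_notMem hω, hφ]
    have hint1 : Integrable (fun ω => Set.indicator C (M K) ω) P := (hMint K).indicator hCm
    have hψb : ∀ ω, |ψ ω| ≤ Real.exp (2 * δ) + 1 := by
      intro ω
      have ha : 2 * δ * (Y (K+1) ω - ν) - δ ^ 2 ≤ 2 * δ := by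
        have h1 := (hYb (K+1) ω).2
        nlinarith [sq_nonneg δ]
      have h2 : Real.exp (2 * δ * (Y (K+1) ω - ν) - δ ^ 2) ≤ Real.exp (2 * δ) :=
        Real.exp_le_exp.2 ha
      have h3 := Real.exp_pos (2 * δ * (Y (K+1) ω - ν) - δ ^ 2)
      rw [abs_le]; constructor <;> simp only [hψ, hg] <;> [linarith; linarith]
    have hφb : ∀ ω, |φ ω| ≤ Real.exp (2 * δ * K) := by
      intro ω
      simp only [hφ]
      rw [abs_mul, abs_of_nonneg (hB0 _ ω)]
      have h1 : |Set.indicator C (M K) ω| ≤ Real.exp (2 * δ * K) := by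
        by_cases hω : ω ∈ C
        · rw [Set.indicator_of_mem hω]; exact hMb K ω
        · rw [Set.indicator_of_notMem hω]; simp [Real.exp_nonneg]
      calc |Set.indicator C (M K) ω| * B (K+1) ω ≤ Real.exp (2 * δ * K) * 1 :=
            mul_le_mul h1 (hB1 _ ω) (hB0 _ ω) (Real.exp_nonneg _)
        _ = Real.exp (2 * δ * K) := by ring
    have hint2 : Integrable (fun ω => φ ω * ψ ω) P := by
      refine integrable_of_bdd (hφm.mul hψm) (C := Real.exp (2 * δ * K) * (Real.exp (2 * δ) + 1))
        fun ω => ?_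
      rw [abs_mul]
      exact mul_le_mul (hφb ω) (hψb ω) (abs_nonneg _)
        (le_trans (abs_nonneg _) (hφb ω))
    have hindφψ : IndepFun φ ψ P := by
      have h1 : MeasurableSpace.comap φ inferInstance ≤ G K := hφG.comap_le
      have h2 : MeasurableSpace.comap ψ inferInstance
          ≤ MeasurableSpace.comap (Y (K+1)) inferInstance := by
        have he : ψ = g ∘ (Y (K+1)) := rfl
        rw [he, ← MeasurableSpace.comap_comp]
        exact MeasurableSpace.comap_mono hgm.comap_le
      exact indep_mono (hYind K) h1 h2
    have hmul : ∫ ω, φ ω * ψ ω ∂P = (∫ ω, φ ω ∂P) * ∫ ω, ψ ω ∂P :=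
      hindφψ.integral_fun_mul_eq_mul_integral hφm.aestronglyMeasurable hψm.aestronglyMeasurable
    have hφpos : 0 ≤ ∫ ω, φ ω ∂P :=
      integral_nonneg fun ω => mul_nonneg (Set.indicator_nonneg (fun x _ => hM0 K x) ω) (hB0 _ ω)
    have hψle : ∫ ω, ψ ω ∂P ≤ 0 := by
      have hmg := mgf_quarter P (Y (K+1)) (hYmΩ _) (hYb _) ν (2 * δ) (hν _)
        (by linarith) (by linarith)
      have hexpint : Integrable (fun ω => Real.exp (2 * δ * (Y (K+1) ω - ν))) P := by
        refine integrable_of_bdd ?_ (C := Real.exp (2 * δ)) fun ω => ?_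
        · exact Real.measurable_exp.comp (((hYmΩ (K+1)).sub measurable_const).const_mul (2 * δ))
        · rw [abs_of_pos (Real.exp_pos _)]
          apply Real.exp_le_exp.2
          have h1 := (hYb (K+1) ω).2
          nlinarith
      have heq : ∫ ω, ψ ω ∂P
          = Real.exp (-δ ^ 2) * (∫ ω, Real.exp (2 * δ * (Y (K+1) ω - ν)) ∂P) - 1 := by
        simp only [hψ, hg]
        have hrw : ∀ u : ℝ, Real.exp (2 * δ * (u - ν) - δ ^ 2)
            = Real.exp (-δ ^ 2) * Real.exp (2 * δ * (u - ν)) := fun u => by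
          rw [← Real.exp_add]; ring_nf
        simp_rw [hrw]
        rw [integral_sub (hexpint.const_mul _) (integrable_const 1), integral_const_mul,
          integral_const]
        simp
      rw [heq]
      have hmg2 : ∫ ω, Real.exp (2 * δ * (Y (K+1) ω - ν)) ∂P ≤ 1 + δ ^ 2 := by
        have : (2 * δ) ^ 2 / 4 = δ ^ 2 := by ring
        linarith [hmg, this.symm.le]
      have h3 : Real.exp (-δ ^ 2) * Real.exp (δ ^ 2) = 1 := by
        rw [← Real.exp_add]; simp
      nlinarith [Real.exp_pos (-δ ^ 2), Real.add_one_le_exp (δ ^ 2)]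
    calc ∫ ω, Set.indicator C (M (K+1)) ω ∂P
        = ∫ ω, (Set.indicator C (M K) ω + φ ω * ψ ω) ∂P := by simp_rw [hpt]
      _ = (∫ ω, Set.indicator C (M K) ω ∂P) + ∫ ω, φ ω * ψ ω ∂P := integral_add hint1 hint2
      _ ≤ ∫ ω, Set.indicator C (M K) ω ∂P := by
          have := mul_nonpos_iff.2 (Or.inr ⟨hψle, hφpos⟩)
          rw [hmul]
          nlinarith [hφpos, hψle]
  -- cumulative claim
  set Cs : ℕ → Set Ω := fun K => {ω | ∀ n ≤ K, ω ∉ A n} with hCs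
  have hCsG : ∀ K, MeasurableSet[G K] (Cs K) := by
    intro K
    have : Cs K = ⋂ n ∈ Finset.range (K+1), (A n)ᶜ := by
      ext ω
      simp only [hCs, Set.mem_setOf_eq, Set.mem_iInter, Finset.mem_range, Set.mem_compl_iff]
      constructor
      · intro h n hn; exact h n (by omega)
      · intro h n hn; exact h n (by omega)
    rw [this]
    exact MeasurableSet.biInter (Set.to_countable _)
      (fun n hn => (G.mono (show n ≤ K by
        have := Finset.mem_range.1 hn; omega) _ (hA n)).compl)
  have claim : ∀ K, (∑ n ∈ Finset.range (K+1), ∫ ω, Set.indicator (A n) (M n) ω ∂P)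
      + ∫ ω, Set.indicator (Cs K) (M K) ω ∂P ≤ 1 := by
    intro K
    induction K with
    | zero =>
      have hA0m : MeasurableSet (A 0) := G.le 0 _ (hA 0)
      have hM0' : M 0 = fun _ => 1 := by
        funext ω
        simp only [hM, hS, hTdef]
        rw [Finset.Icc_eq_empty (by omega)]
        simp
      have hC0 : Cs 0 = (A 0)ᶜ := by
        ext ω; simp [hCs, Nat.le_zero]
      have e1 : ∫ ω, Set.indicator (A 0) (M 0) ω ∂P = (P (A 0)).toReal := by
        rw [hM0']; exact integral_indicator_one hA0m
      have e2 : ∫ ω, Set.indicator (Cs 0) (M 0) ω ∂P = (P (A 0)ᶜ).toReal := by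
        rw [hM0', hC0]; exact integral_indicator_one hA0m.compl
      rw [Finset.sum_range_one, e1, e2]
      have hadd := prob_add_prob_compl (μ := P) hA0m
      have h1 : (P (A 0)).toReal + (P (A 0)ᶜ).toReal = 1 := by
        rw [← ENNReal.toReal_add (measure_ne_top P _) (measure_ne_top P _), hadd]
        simp
      linarith
    | succ K ih =>
      have hAK1 : MeasurableSet (A (K+1)) := G.le _ _ (hA _)
      have hsub : A (K+1) ⊆ Cs K := by
        intro ω' hω' n hn hA'
        exact Set.disjoint_left.1 (hdisj (show n ≠ K+1 by omega)) hA' hω'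
      have hCeq : ∀ ω, ω ∈ Cs (K+1) ↔ ω ∈ Cs K ∧ ω ∉ A (K+1) := by
        intro ω
        simp only [hCs, Set.mem_setOf_eq]
        constructor
        · intro h; exact ⟨fun n hn => h n (by omega), h (K+1) le_rfl⟩
        · rintro ⟨h1, h2⟩ n hn
          by_cases hcase : n = K + 1
          · subst hcase; exact h2
          · exact h1 n (by omega)
      have hsplit : ∀ ω, Set.indicator (Cs K) (M (K+1)) ω
          = Set.indicator (Cs (K+1)) (M (K+1)) ω + Set.indicator (A (K+1)) (M (K+1)) ω := by
        intro ω
        by_cases h1 : ω ∈ A (K+1)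
        · have h2 : ω ∈ Cs K := hsub h1
          have h3 : ω ∉ Cs (K+1) := fun h => ((hCeq ω).1 h).2 h1
          rw [Set.indicator_of_mem h2, Set.indicator_of_notMem h3, Set.indicator_of_mem h1]
          ring
        · by_cases h2 : ω ∈ Cs K
          · have h3 : ω ∈ Cs (K+1) := (hCeq ω).2 ⟨h2, h1⟩
            rw [Set.indicator_of_mem h2, Set.indicator_of_mem h3, Set.indicator_of_notMem h1]
            ring
          · have h3 : ω ∉ Cs (K+1) := fun h => h2 ((hCeq ω).1 h).1
            rw [Set.indicator_of_notMem h2, Set.indicator_of_notMem h3,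
              Set.indicator_of_notMem h1]
            ring
      have hi1 : Integrable (fun ω => Set.indicator (Cs (K+1)) (M (K+1)) ω) P :=
        (hMint _).indicator (G.le _ _ (hCsG (K+1)))
      have hi2 : Integrable (fun ω => Set.indicator (A (K+1)) (M (K+1)) ω) P :=
        (hMint _).indicator hAK1
      have heq : ∫ ω, Set.indicator (Cs K) (M (K+1)) ω ∂P
          = (∫ ω, Set.indicator (Cs (K+1)) (M (K+1)) ω ∂P)
            + ∫ ω, Set.indicator (A (K+1)) (M (K+1)) ω ∂P := by
        calc ∫ ω, Set.indicator (Cs K) (M (K+1)) ω ∂P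
            = ∫ ω, (Set.indicator (Cs (K+1)) (M (K+1)) ω
                + Set.indicator (A (K+1)) (M (K+1)) ω) ∂P := by simp_rw [hsplit]
          _ = _ := integral_add hi1 hi2
      have hstep := step K (Cs K) (hCsG K)
      rw [Finset.sum_range_succ]
      linarith
  -- from claim to probability bound
  show ∑' n : ℕ, P (A n ∩ {ω | δ * T n ω ≤ S n ω}) ≤ ENNReal.ofReal (Real.exp (-(δ ^ 2) * m))
  have hAm : ∀ n, MeasurableSet (A n) := fun n => G.le n _ (hA n)
  have hdevm : ∀ n, MeasurableSet {ω | δ * T n ω ≤ S n ω} := fun n =>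
    measurableSet_le (((hTG n).mono (G.le n) le_rfl).const_mul δ)
      ((hSG n).mono (G.le n) le_rfl)
  have hPn : ∀ n, (P (A n ∩ {ω | δ * T n ω ≤ S n ω})).toReal
      ≤ Real.exp (-(δ ^ 2) * m) * ∫ ω, Set.indicator (A n) (M n) ω ∂P := by
    intro n
    have hEm : MeasurableSet (A n ∩ {ω | δ * T n ω ≤ S n ω}) := (hAm n).inter (hdevm n)
    rw [← measureReal_def, ← integral_indicator_one hEm]
    have hptw : ∀ ω, Set.indicator (A n ∩ {ω | δ * T n ω ≤ S n ω}) 1 ω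
        ≤ Real.exp (-(δ ^ 2) * m) * Set.indicator (A n) (M n) ω := by
      intro ω
      by_cases hω : ω ∈ A n ∩ {ω | δ * T n ω ≤ S n ω}
      · rw [Set.indicator_of_mem hω, Set.indicator_of_mem hω.1]
        have h1 : δ * T n ω ≤ S n ω := hω.2
        have h2 : m ≤ T n ω := hT n ω hω.1
        have h3 : Real.exp (-(δ ^ 2) * m) * M n ω
            = Real.exp (-(δ ^ 2) * m + (2 * δ * S n ω - δ ^ 2 * T n ω)) := by
          rw [Real.exp_add]
        rw [Pi.one_apply, h3]
        apply Real.one_le_exp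
        nlinarith [mul_le_mul_of_nonneg_left h1 (by linarith : (0:ℝ) ≤ 2 * δ)]
      · rw [Set.indicator_of_notMem hω]
        exact mul_nonneg (Real.exp_nonneg _) (Set.indicator_nonneg (fun x _ => hM0 n x) ω)
    calc ∫ ω, Set.indicator (A n ∩ {ω | δ * T n ω ≤ S n ω}) 1 ω ∂P
        ≤ ∫ ω, Real.exp (-(δ ^ 2) * m) * Set.indicator (A n) (M n) ω ∂P := by
          refine integral_mono ?_ (((hMint n).indicator (hAm n)).const_mul _) hptw
          exact integrable_of_bdd (measurable_one.indicator hEm) (C := 1) fun ω => by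
            by_cases hω : ω ∈ A n ∩ {ω | δ * T n ω ≤ S n ω} <;>
              simp [Set.indicator_apply, hω]
      _ = Real.exp (-(δ ^ 2) * m) * ∫ ω, Set.indicator (A n) (M n) ω ∂P :=
          integral_const_mul _ _
  have hpart : ∀ K : ℕ, ∑ n ∈ Finset.range (K+1),
      (P (A n ∩ {ω | δ * T n ω ≤ S n ω})).toReal ≤ Real.exp (-(δ ^ 2) * m) := by
    intro K
    have h2 : 0 ≤ ∫ ω, Set.indicator (Cs K) (M K) ω ∂P :=
      integral_nonneg (fun ω => Set.indicator_nonneg (fun x _ => hM0 K x) ω)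
    have h1 : ∑ n ∈ Finset.range (K+1), ∫ ω, Set.indicator (A n) (M n) ω ∂P ≤ 1 := by
      linarith [claim K]
    calc ∑ n ∈ Finset.range (K+1), (P (A n ∩ {ω | δ * T n ω ≤ S n ω})).toReal
        ≤ ∑ n ∈ Finset.range (K+1),
            Real.exp (-(δ ^ 2) * m) * ∫ ω, Set.indicator (A n) (M n) ω ∂P :=
          Finset.sum_le_sum fun n _ => hPn n
      _ = Real.exp (-(δ ^ 2) * m)
            * ∑ n ∈ Finset.range (K+1), ∫ ω, Set.indicator (A n) (M n) ω ∂P := by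
          rw [Finset.mul_sum]
      _ ≤ Real.exp (-(δ ^ 2) * m) * 1 :=
          mul_le_mul_of_nonneg_left h1 (Real.exp_nonneg _)
      _ = Real.exp (-(δ ^ 2) * m) := mul_one _
  rw [ENNReal.tsum_eq_iSup_sum]
  refine iSup_le fun F => ?_
  obtain ⟨K, hK⟩ : ∃ K : ℕ, F ⊆ Finset.range (K+1) :=
    ⟨F.sup id, fun x hx => Finset.mem_range.2 (by
      have := Finset.le_sup (f := id) hx; simp only [id] at this; omega)⟩
  calc ∑ n ∈ F, P (A n ∩ {ω | δ * T n ω ≤ S n ω})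
      ≤ ∑ n ∈ Finset.range (K+1), P (A n ∩ {ω | δ * T n ω ≤ S n ω}) :=
        Finset.sum_le_sum_of_subset hK
    _ = ENNReal.ofReal (∑ n ∈ Finset.range (K+1),
          (P (A n ∩ {ω | δ * T n ω ≤ S n ω})).toReal) := by
        rw [ENNReal.ofReal_sum_of_nonneg (fun n _ => ENNReal.toReal_nonneg)]
        exact Finset.sum_congr rfl fun n _ => (ENNReal.ofReal_toReal (measure_ne_top P _)).symm
    _ ≤ ENNReal.ofReal (Real.exp (-(δ ^ 2) * m)) := ENNReal.ofReal_le_ofReal (hpart K)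

lemma natural_indep {Ω : Type*} {mΩ : MeasurableSpace Ω} (P : Measure Ω) [IsProbabilityMeasure P]
    (Z Z' : ℕ → Ω → ℝ)
    (hpm : ∀ t, StronglyMeasurable (fun ω => (Z t ω, Z' t ω)))
    (hindep : iIndepFun (m := fun _ => inferInstance)
      (fun p : Bool × ℕ => if p.1 then Z' p.2 else Z p.2) P)
    (N t : ℕ) (hNt : N < t) (b : Bool) :
    Indep ((MeasureTheory.Filtration.natural _ hpm) N)
      (MeasurableSpace.comap (if b then Z' t else Z t) inferInstance) P := by
  set fam : Bool × ℕ → Ω → ℝ := fun p => if p.1 then Z' p.2 else Z p.2 with hfam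
  have hZm : ∀ s, Measurable (Z s) := fun s => (hpm s).measurable.fst
  have hZm' : ∀ s, Measurable (Z' s) := fun s => (hpm s).measurable.snd
  have hfamm : ∀ p, Measurable (fam p) := by
    rintro ⟨b', s⟩
    by_cases hb : b' <;> simp [hfam, hb, hZm, hZm']
  have h_le : ∀ p : Bool × ℕ, MeasurableSpace.comap (fam p) inferInstance ≤ mΩ :=
    fun p => (hfamm p).comap_le
  have hii : iIndep (fun p : Bool × ℕ => MeasurableSpace.comap (fam p) inferInstance) P := hindep
  have hdisj : Disjoint {p : Bool × ℕ | p.2 ≤ N} {(b, t)} := by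
    rw [Set.disjoint_singleton_right]
    simp only [Set.mem_setOf_eq]
    omega
  have hbig := indep_iSup_of_disjoint h_le hii hdisj
  have hright : (⨆ p ∈ ({(b, t)} : Set (Bool × ℕ)),
      MeasurableSpace.comap (fam p) inferInstance)
      = MeasurableSpace.comap (if b then Z' t else Z t) inferInstance := by
    rw [iSup_singleton]
  have hleft : ((MeasureTheory.Filtration.natural _ hpm) N : MeasurableSpace Ω)
      ≤ ⨆ p ∈ {p : Bool × ℕ | p.2 ≤ N}, MeasurableSpace.comap (fam p) inferInstance := by
    have hnat : ((MeasureTheory.Filtration.natural _ hpm) N : MeasurableSpace Ω)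
        = ⨆ j ≤ N, MeasurableSpace.comap (fun ω => (Z j ω, Z' j ω)) inferInstance := rfl
    rw [hnat]
    refine iSup₂_le fun j hj => ?_
    have hpair : MeasurableSpace.comap (fun ω => (Z j ω, Z' j ω)) inferInstance
        ≤ MeasurableSpace.comap (Z j) inferInstance ⊔
          MeasurableSpace.comap (Z' j) inferInstance := by
      apply Measurable.comap_le
      apply Measurable.prodMk
      · exact (Measurable.of_comap_le le_rfl).mono le_sup_left le_rfl
      · exact (Measurable.of_comap_le le_rfl).mono le_sup_right le_rfl
    refine le_trans hpair (sup_le ?_ ?_)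
    · have h1 : MeasurableSpace.comap (Z j) inferInstance
          = MeasurableSpace.comap (fam (false, j)) inferInstance := rfl
      rw [h1]
      exact le_biSup (f := fun p : Bool × ℕ => MeasurableSpace.comap (fam p) inferInstance)
        (show ((false, j) : Bool × ℕ) ∈ {p : Bool × ℕ | p.2 ≤ N} from hj)
    · have h1 : MeasurableSpace.comap (Z' j) inferInstance
          = MeasurableSpace.comap (fam (true, j)) inferInstance := rfl
      rw [h1]
      exact le_biSup (f := fun p : Bool × ℕ => MeasurableSpace.comap (fam p) inferInstance)
        (show ((true, j) : Bool × ℕ) ∈ {p : Bool × ℕ | p.2 ≤ N} from hj)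
  rw [hright] at hbig
  exact fun t1 t2 ht1 ht2 => hbig t1 t2 (hleft _ ht1) ht2

theorem stmt_10 {Ω : Type*} {mΩ : MeasurableSpace Ω} (P : Measure Ω) [IsProbabilityMeasure P]
    (Z Z' : ℕ → Ω → ℝ)
    (hpm : ∀ t, StronglyMeasurable (fun ω => (Z t ω, Z' t ω)))
    (hZb : ∀ t ω, Z t ω ∈ Set.Icc (0 : ℝ) 1) (hZb' : ∀ t ω, Z' t ω ∈ Set.Icc (0 : ℝ) 1)
    (hindep : iIndepFun (m := fun _ => inferInstance)
      (fun p : Bool × ℕ => if p.1 then Z' p.2 else Z p.2) P)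
    (μ μ' Δ : ℝ) (hΔ : 0 < Δ)
    (hmean : ∀ t, ∫ ω, Z t ω ∂P = μ) (hmean' : ∀ t, ∫ ω, Z' t ω ∂P = μ')
    -- arm k is separated from arm k' by at least Δ
    (hgap : μ ≤ μ' - Δ)
    (Bsel Bsel' : ℕ → Ω → ℝ)
    (hB01 : ∀ t ω, Bsel t ω = 0 ∨ Bsel t ω = 1)
    (hB01' : ∀ t ω, Bsel' t ω = 0 ∨ Bsel' t ω = 1)
    (hBm : ∀ t, Measurable[(MeasureTheory.Filtration.natural _ hpm) (t - 1)] (Bsel t))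
    (hBm' : ∀ t, Measurable[(MeasureTheory.Filtration.natural _ hpm) (t - 1)] (Bsel' t))
    (ε : ℝ) (hε : 0 < ε)
    (Λ : Ω → Set ℕ) (Λs : ℕ → Ω → Set ℕ)
    (hsub : ∀ ω, Λ ω ⊆ ⋃ s ∈ Set.Ici 1, Λs s ω)
    (hbig : ∀ s : ℕ, ∀ ω, ∀ n ∈ Λs s ω, ε * (s : ℝ) ≤ ∑ t ∈ Finset.Icc 1 n, Bsel t ω)
    (hbig' : ∀ s : ℕ, ∀ ω, ∀ n ∈ Λs s ω, ε * (s : ℝ) ≤ ∑ t ∈ Finset.Icc 1 n, Bsel' t ω)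
    (hone : ∀ s ω, (Λs s ω).Subsingleton)
    (hmeasΛ : ∀ s n,
      MeasurableSet[(MeasureTheory.Filtration.natural _ hpm) n] {ω | n ∈ Λs s ω}) :
    ∫⁻ ω, ∑' n : ℕ,
        (if n ∈ Λ ω ∧
            (if 0 < ∑ t ∈ Finset.Icc 1 n, Bsel' t ω then
              (∑ t ∈ Finset.Icc 1 n, Bsel' t ω * Z' t ω) /
                (∑ t ∈ Finset.Icc 1 n, Bsel' t ω)
            else 0) <
            (if 0 < ∑ t ∈ Finset.Icc 1 n, Bsel t ω then
              (∑ t ∈ Finset.Icc 1 n, Bsel t ω * Z t ω) /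
                (∑ t ∈ Finset.Icc 1 n, Bsel t ω)
            else 0)
          then (1 : ℝ≥0∞) else 0) ∂P
      ≤ ENNReal.ofReal (8 / (ε * Δ ^ 2)) := by
  classical
  set F := MeasureTheory.Filtration.natural _ hpm with hFdef
  have hZm : ∀ t, Measurable (Z t) := fun t => (hpm t).measurable.fst
  have hZm' : ∀ t, Measurable (Z' t) := fun t => (hpm t).measurable.snd
  have hBmΩ : ∀ t, Measurable (Bsel t) := fun t => (hBm t).mono (F.le _) le_rfl
  have hBmΩ' : ∀ t, Measurable (Bsel' t) := fun t => (hBm' t).mono (F.le _) le_rfl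
  set δ : ℝ := Δ / 2 with hδdef
  have hδ : 0 < δ := by rw [hδdef]; linarith
  have hμ0 : 0 ≤ μ := (hmean 0) ▸ integral_nonneg fun ω => (hZb 0 ω).1
  have hμ'1 : μ' ≤ 1 := by
    rw [← hmean' 0]
    calc ∫ ω, Z' 0 ω ∂P ≤ ∫ _ω, (1:ℝ) ∂P :=
          integral_mono (integrable_of_bdd (hZm' 0) (C := 1)
            (fun ω => abs_le.2 ⟨by linarith [(hZb' 0 ω).1], (hZb' 0 ω).2⟩))
            (integrable_const 1) (fun ω => (hZb' 0 ω).2)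
      _ = 1 := by simp
  have h2δ : 2 * δ ≤ 1 := by rw [hδdef]; linarith
  -- adaptedness of Z, Z' to natural filtration
  have hpairle : ∀ t : ℕ, MeasurableSpace.comap (fun ω => (Z t ω, Z' t ω)) inferInstance
      ≤ F t := by
    intro t
    have hFt : (F t : MeasurableSpace Ω)
        = ⨆ j ≤ t, MeasurableSpace.comap (fun ω => (Z j ω, Z' j ω)) inferInstance := rfl
    rw [hFt]
    exact le_iSup₂ (f := fun j (_ : j ≤ t) =>
      MeasurableSpace.comap (fun ω => (Z j ω, Z' j ω)) inferInstance) t le_rfl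
  have hZad : ∀ t, Measurable[F t] (Z t) :=
    fun t => (Measurable.of_comap_le (hpairle t)).fst
  have hZad' : ∀ t, Measurable[F t] (Z' t) :=
    fun t => (Measurable.of_comap_le (hpairle t)).snd
  -- the sets
  set Dset : ℕ → Set Ω := fun n => {ω |
      (if 0 < ∑ t ∈ Finset.Icc 1 n, Bsel' t ω then
        (∑ t ∈ Finset.Icc 1 n, Bsel' t ω * Z' t ω) / (∑ t ∈ Finset.Icc 1 n, Bsel' t ω)
      else 0) <
      (if 0 < ∑ t ∈ Finset.Icc 1 n, Bsel t ω then
        (∑ t ∈ Finset.Icc 1 n, Bsel t ω * Z t ω) / (∑ t ∈ Finset.Icc 1 n, Bsel t ω)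
      else 0)} with hDdef
  set Aset : ℕ → ℕ → Set Ω := fun s n => {ω | n ∈ Λs s ω} with hAdef
  set AD : ℕ → ℕ → Set Ω := fun s n => if 1 ≤ s then Aset s n ∩ Dset n else ∅ with hADdef
  set dev1 : ℕ → Set Ω := fun n => {ω | δ * ∑ t ∈ Finset.Icc 1 n, Bsel t ω
      ≤ ∑ t ∈ Finset.Icc 1 n, Bsel t ω * (Z t ω - μ)} with hdev1
  set dev2 : ℕ → Set Ω := fun n => {ω | δ * ∑ t ∈ Finset.Icc 1 n, Bsel' t ω
      ≤ ∑ t ∈ Finset.Icc 1 n, Bsel' t ω * ((1 - Z' t ω) - (1 - μ'))} with hdev2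
  -- measurability
  have hAm : ∀ s n, MeasurableSet (Aset s n) := fun s n => F.le n _ (hmeasΛ s n)
  have hTm : ∀ n, Measurable (fun ω => ∑ t ∈ Finset.Icc 1 n, Bsel t ω) :=
    fun n => Finset.measurable_sum _ fun t _ => hBmΩ t
  have hTm' : ∀ n, Measurable (fun ω => ∑ t ∈ Finset.Icc 1 n, Bsel' t ω) :=
    fun n => Finset.measurable_sum _ fun t _ => hBmΩ' t
  have hWm : ∀ n, Measurable (fun ω => ∑ t ∈ Finset.Icc 1 n, Bsel t ω * Z t ω) :=
    fun n => Finset.measurable_sum _ fun t _ => (hBmΩ t).mul (hZm t)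
  have hWm' : ∀ n, Measurable (fun ω => ∑ t ∈ Finset.Icc 1 n, Bsel' t ω * Z' t ω) :=
    fun n => Finset.measurable_sum _ fun t _ => (hBmΩ' t).mul (hZm' t)
  have hvm : ∀ n, Measurable (fun ω => if 0 < ∑ t ∈ Finset.Icc 1 n, Bsel t ω then
      (∑ t ∈ Finset.Icc 1 n, Bsel t ω * Z t ω) / (∑ t ∈ Finset.Icc 1 n, Bsel t ω) else 0) :=
    fun n => Measurable.ite (measurableSet_lt measurable_const (hTm n))
      ((hWm n).div (hTm n)) measurable_const
  have hvm' : ∀ n, Measurable (fun ω => if 0 < ∑ t ∈ Finset.Icc 1 n, Bsel' t ω then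
      (∑ t ∈ Finset.Icc 1 n, Bsel' t ω * Z' t ω) / (∑ t ∈ Finset.Icc 1 n, Bsel' t ω) else 0) :=
    fun n => Measurable.ite (measurableSet_lt measurable_const (hTm' n))
      ((hWm' n).div (hTm' n)) measurable_const
  have hDm : ∀ n, MeasurableSet (Dset n) := fun n => measurableSet_lt (hvm' n) (hvm n)
  have hADm : ∀ s n, MeasurableSet (AD s n) := by
    intro s n
    simp only [hADdef]
    by_cases hs : 1 ≤ s
    · rw [if_pos hs]; exact (hAm s n).inter (hDm n)
    · rw [if_neg hs]; exact MeasurableSet.empty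
  -- pointwise domination
  have hpt : ∀ ω n, (if n ∈ Λ ω ∧ ω ∈ Dset n then (1:ℝ≥0∞) else 0)
      ≤ ∑' s : ℕ, Set.indicator (AD s n) (fun _ => (1:ℝ≥0∞)) ω := by
    intro ω n
    split_ifs with h
    · obtain ⟨hΛn, hlt⟩ := h
      obtain ⟨s, hs1, hmem⟩ := Set.mem_iUnion₂.1 (hsub ω hΛn)
      have h1 : Set.indicator (AD s n) (fun _ => (1:ℝ≥0∞)) ω = 1 := by
        have : ω ∈ AD s n := by
          simp only [hADdef]
          simp only [if_pos (show 1 ≤ s from hs1)]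
          exact ⟨hmem, hlt⟩
        rw [Set.indicator_of_mem this]
      calc (1:ℝ≥0∞) = Set.indicator (AD s n) (fun _ => (1:ℝ≥0∞)) ω := h1.symm
        _ ≤ _ := ENNReal.le_tsum s
    · exact zero_le
  -- the subset property
  have hsubAD : ∀ s n, 1 ≤ s →
      AD s n ⊆ (Aset s n ∩ dev1 n) ∪ (Aset s n ∩ dev2 n) := by
    intro s n hs ω hω
    simp only [hADdef] at hω
    rw [if_pos hs] at hω
    obtain ⟨hmem, hlt⟩ := hω
    have hT1 : ε * (s:ℝ) ≤ ∑ t ∈ Finset.Icc 1 n, Bsel t ω := hbig s ω n hmem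
    have hT2 : ε * (s:ℝ) ≤ ∑ t ∈ Finset.Icc 1 n, Bsel' t ω := hbig' s ω n hmem
    have hspos : (0:ℝ) < ε * s := by
      have : (1:ℝ) ≤ (s:ℝ) := by exact_mod_cast hs
      nlinarith
    have hTpos : 0 < ∑ t ∈ Finset.Icc 1 n, Bsel t ω := lt_of_lt_of_le hspos hT1
    have hTpos' : 0 < ∑ t ∈ Finset.Icc 1 n, Bsel' t ω := lt_of_lt_of_le hspos hT2
    have hlt' : (∑ t ∈ Finset.Icc 1 n, Bsel' t ω * Z' t ω) /
          (∑ t ∈ Finset.Icc 1 n, Bsel' t ω)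
        < (∑ t ∈ Finset.Icc 1 n, Bsel t ω * Z t ω) / (∑ t ∈ Finset.Icc 1 n, Bsel t ω) := by
      have := hlt
      simp only [hDdef] at this
      simp only [Set.mem_setOf_eq, if_pos hTpos, if_pos hTpos'] at this
      exact this
    by_contra hcon
    simp only [Set.mem_union, Set.mem_inter_iff, not_or, not_and_or] at hcon
    obtain ⟨hc1, hc2⟩ := hcon
    have hnd1 : ω ∉ dev1 n := by
      rcases hc1 with h | h
      · exact absurd hmem h
      · exact h
    have hnd2 : ω ∉ dev2 n := by
      rcases hc2 with h | h
      · exact absurd hmem h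
      · exact h
    simp only [hdev1] at hnd1
    simp only [hdev2] at hnd2
    simp only [Set.mem_setOf_eq, not_le] at hnd1 hnd2
    have he1 : ∑ t ∈ Finset.Icc 1 n, Bsel t ω * (Z t ω - μ)
        = (∑ t ∈ Finset.Icc 1 n, Bsel t ω * Z t ω)
          - μ * ∑ t ∈ Finset.Icc 1 n, Bsel t ω := by
      rw [Finset.mul_sum, ← Finset.sum_sub_distrib]
      exact Finset.sum_congr rfl fun t _ => by ring
    have he2 : ∑ t ∈ Finset.Icc 1 n, Bsel' t ω * ((1 - Z' t ω) - (1 - μ'))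
        = μ' * (∑ t ∈ Finset.Icc 1 n, Bsel' t ω)
          - ∑ t ∈ Finset.Icc 1 n, Bsel' t ω * Z' t ω := by
      rw [Finset.mul_sum, ← Finset.sum_sub_distrib]
      exact Finset.sum_congr rfl fun t _ => by ring
    rw [he1] at hnd1
    rw [he2] at hnd2
    have hv1 : (∑ t ∈ Finset.Icc 1 n, Bsel t ω * Z t ω) / (∑ t ∈ Finset.Icc 1 n, Bsel t ω)
        < μ + δ := (div_lt_iff₀ hTpos).2 (by nlinarith)
    have hv2 : μ' - δ < (∑ t ∈ Finset.Icc 1 n, Bsel' t ω * Z' t ω)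
        / (∑ t ∈ Finset.Icc 1 n, Bsel' t ω) := (lt_div_iff₀ hTpos').2 (by nlinarith)
    have hgap2 : μ + δ ≤ μ' - δ := by rw [hδdef] at *; linarith
    linarith
  -- two applications of key_dev
  have happ1 : ∀ s : ℕ, 1 ≤ s → ∑' n : ℕ, P (Aset s n ∩ dev1 n)
      ≤ ENNReal.ofReal (Real.exp (-(δ ^ 2) * (ε * s))) := by
    intro s hs
    refine key_dev P F Z hZad hZb μ hmean ?_ Bsel hB01 hBm δ hδ h2δ (Aset s)
      (fun n => hmeasΛ s n) ?_ (ε * s) (fun n ω hω => hbig s ω n hω)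
    · intro N
      have := natural_indep P Z Z' hpm hindep N (N+1) (by omega) false
      simpa using this
    · intro n m hnm
      rw [Set.disjoint_left]
      intro ω h1 h2
      exact hnm (hone s ω h1 h2)
  have happ2 : ∀ s : ℕ, 1 ≤ s → ∑' n : ℕ, P (Aset s n ∩ dev2 n)
      ≤ ENNReal.ofReal (Real.exp (-(δ ^ 2) * (ε * s))) := by
    intro s hs
    refine key_dev P F (fun t ω => 1 - Z' t ω) (fun t => (measurable_const.sub (hZad' t)))
      (fun t ω => Set.mem_Icc.2 ⟨show (0:ℝ) ≤ 1 - Z' t ω by linarith [(hZb' t ω).2],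
        show (1:ℝ) - Z' t ω ≤ 1 by linarith [(hZb' t ω).1]⟩)
      (1 - μ')
      (fun t => ?_) ?_ Bsel' hB01' hBm' δ hδ h2δ (Aset s)
      (fun n => hmeasΛ s n) ?_ (ε * s) (fun n ω hω => hbig' s ω n hω)
    · have hint : Integrable (Z' t) P := integrable_of_bdd (hZm' t) (C := 1)
        (fun ω => abs_le.2 ⟨by linarith [(hZb' t ω).1], (hZb' t ω).2⟩)
      rw [integral_sub (integrable_const 1) hint, integral_const, hmean' t]
      simp
    · intro N
      have hbase := natural_indep P Z Z' hpm hindep N (N+1) (by omega) true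
      have hbase' : Indep (F N) (MeasurableSpace.comap (Z' (N+1)) inferInstance) P := by
        simpa using hbase
      refine indep_mono hbase' le_rfl ?_
      show MeasurableSpace.comap ((fun x : ℝ => 1 - x) ∘ (Z' (N+1))) inferInstance ≤ _
      rw [← MeasurableSpace.comap_comp]
      exact MeasurableSpace.comap_mono (measurable_const.sub measurable_id).comap_le
    · intro n m hnm
      rw [Set.disjoint_left]
      intro ω h1 h2
      exact hnm (hone s ω h1 h2)
  -- per-scale bound
  have hscale : ∀ s : ℕ, ∑' n : ℕ, P (AD s n)
      ≤ if 1 ≤ s then 2 * ENNReal.ofReal (Real.exp (-(δ ^ 2) * (ε * s))) else 0 := by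
    intro s
    by_cases hs : 1 ≤ s
    · rw [if_pos hs]
      calc ∑' n : ℕ, P (AD s n)
          ≤ ∑' n : ℕ, (P (Aset s n ∩ dev1 n) + P (Aset s n ∩ dev2 n)) := by
            refine ENNReal.tsum_le_tsum fun n => ?_
            calc P (AD s n) ≤ P ((Aset s n ∩ dev1 n) ∪ (Aset s n ∩ dev2 n)) :=
                  measure_mono (hsubAD s n hs)
              _ ≤ _ := measure_union_le _ _
        _ = (∑' n : ℕ, P (Aset s n ∩ dev1 n)) + ∑' n : ℕ, P (Aset s n ∩ dev2 n) :=
            ENNReal.tsum_add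
        _ ≤ ENNReal.ofReal (Real.exp (-(δ ^ 2) * (ε * s)))
            + ENNReal.ofReal (Real.exp (-(δ ^ 2) * (ε * s))) :=
            add_le_add (happ1 s hs) (happ2 s hs)
        _ = 2 * ENNReal.ofReal (Real.exp (-(δ ^ 2) * (ε * s))) := by ring
    · rw [if_neg hs]
      have : ∀ n, AD s n = ∅ := fun n => by simp only [hADdef]; exact if_neg hs
      simp [this]
  -- final geometric sum bound
  have hfinal : ∑' s : ℕ, (if 1 ≤ s then 2 * ENNReal.ofReal (Real.exp (-(δ ^ 2) * (ε * s)))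
      else 0) ≤ ENNReal.ofReal (8 / (ε * Δ ^ 2)) := by
    set x : ℝ := δ ^ 2 * ε with hxdef
    have hx : 0 < x := by
      rw [hxdef]; exact mul_pos (pow_pos hδ 2) hε
    set r : ℝ := Real.exp (-x) with hrdef
    have hr0 : 0 < r := Real.exp_pos _
    have hr1 : r < 1 := by
      rw [hrdef]
      calc Real.exp (-x) < Real.exp 0 := Real.exp_lt_exp.2 (by linarith)
        _ = 1 := Real.exp_zero
    have h1r : 0 < 1 - r := by linarith
    have hterm : ∀ s : ℕ,
        (if 1 ≤ s then 2 * ENNReal.ofReal (Real.exp (-(δ ^ 2) * (ε * s))) else 0)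
          = ENNReal.ofReal (if 1 ≤ s then 2 * r ^ s else 0) := by
      intro s
      by_cases hs : 1 ≤ s
      · rw [if_pos hs, if_pos hs]
        have he : Real.exp (-(δ ^ 2) * (ε * s)) = r ^ s := by
          rw [hrdef, ← Real.exp_nat_mul]
          congr 1
          simp only [hxdef]
          push_cast
          ring
        rw [he, ENNReal.ofReal_mul (by norm_num : (0:ℝ) ≤ 2)]
        simp [ENNReal.ofReal_ofNat]
      · rw [if_neg hs, if_neg hs]
        simp
    simp_rw [hterm]
    rw [ENNReal.tsum_eq_iSup_sum]
    refine iSup_le fun Fs => ?_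
    obtain ⟨K, hK⟩ : ∃ K : ℕ, Fs ⊆ Finset.range (K+1) :=
      ⟨Fs.sup id, fun y hy => Finset.mem_range.2 (by
        have := Finset.le_sup (f := id) hy; simp only [id] at this; omega)⟩
    have hsumnn : ∀ s ∈ Finset.range (K+1), (0:ℝ) ≤ (if 1 ≤ s then 2 * r ^ s else 0) :=
      fun s _ => by positivity
    calc ∑ s ∈ Fs, ENNReal.ofReal (if 1 ≤ s then 2 * r ^ s else 0)
        ≤ ∑ s ∈ Finset.range (K+1), ENNReal.ofReal (if 1 ≤ s then 2 * r ^ s else 0) :=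
          Finset.sum_le_sum_of_subset hK
      _ = ENNReal.ofReal (∑ s ∈ Finset.range (K+1), (if 1 ≤ s then 2 * r ^ s else 0)) :=
          (ENNReal.ofReal_sum_of_nonneg hsumnn).symm
      _ ≤ ENNReal.ofReal (8 / (ε * Δ ^ 2)) := by
          apply ENNReal.ofReal_le_ofReal
          have hshift : ∑ s ∈ Finset.range (K+1), (if 1 ≤ s then 2 * r ^ s else 0)
              = ∑ i ∈ Finset.range K, 2 * r ^ (i+1) := by
            rw [Finset.sum_range_succ']
            have h0 : (if 1 ≤ (0:ℕ) then 2 * r ^ (0:ℕ) else 0) = 0 := by norm_num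
            rw [h0, add_zero]
            exact Finset.sum_congr rfl fun i _ => by rw [if_pos (by omega : 1 ≤ i + 1)]
          rw [hshift]
          have hgeom : ∑ i ∈ Finset.range K, r ^ i ≤ (1 - r)⁻¹ := by
            have hs2 := Summable.sum_le_tsum (Finset.range K) (fun i _ => by positivity)
              (summable_geometric_of_lt_one hr0.le hr1)
            rwa [tsum_geometric_of_lt_one hr0.le hr1] at hs2
          have hEQ : ∑ i ∈ Finset.range K, 2 * r ^ (i+1)
              = 2 * r * ∑ i ∈ Finset.range K, r ^ i := by
            rw [Finset.mul_sum]
            exact Finset.sum_congr rfl fun i _ => by rw [pow_succ]; ring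
          have hxe : r * Real.exp x = 1 := by
            rw [hrdef, ← Real.exp_add]
            simp
          have hkey : 2 * r * (1 - r)⁻¹ ≤ 8 / (ε * Δ ^ 2) := by
            have h8 : 8 / (ε * Δ ^ 2) = 2 / x := by
              rw [hxdef, hδdef, div_eq_div_iff (by positivity) (by positivity)]
              ring
            rw [h8, show 2 * r * (1 - r)⁻¹ = (2 * r) / (1 - r) from by rw [div_eq_mul_inv],
              div_le_div_iff₀ h1r hx]
            nlinarith [Real.add_one_le_exp x, hxe, hr0.le]
          calc ∑ i ∈ Finset.range K, 2 * r ^ (i+1)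
              = 2 * r * ∑ i ∈ Finset.range K, r ^ i := hEQ
            _ ≤ 2 * r * (1 - r)⁻¹ := by
                apply mul_le_mul_of_nonneg_left hgeom
                positivity
            _ ≤ 8 / (ε * Δ ^ 2) := hkey
  -- assembling
  calc ∫⁻ ω, ∑' n : ℕ,
        (if n ∈ Λ ω ∧
            (if 0 < ∑ t ∈ Finset.Icc 1 n, Bsel' t ω then
              (∑ t ∈ Finset.Icc 1 n, Bsel' t ω * Z' t ω) /
                (∑ t ∈ Finset.Icc 1 n, Bsel' t ω)
            else 0) <
            (if 0 < ∑ t ∈ Finset.Icc 1 n, Bsel t ω then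
              (∑ t ∈ Finset.Icc 1 n, Bsel t ω * Z t ω) /
                (∑ t ∈ Finset.Icc 1 n, Bsel t ω)
            else 0)
          then (1 : ℝ≥0∞) else 0) ∂P
      ≤ ∫⁻ ω, ∑' n : ℕ, ∑' s : ℕ, Set.indicator (AD s n) (fun _ => (1:ℝ≥0∞)) ω ∂P := by
        refine lintegral_mono fun ω => ENNReal.tsum_le_tsum fun n => ?_
        exact hpt ω n
    _ = ∑' n : ℕ, ∫⁻ ω, ∑' s : ℕ, Set.indicator (AD s n) (fun _ => (1:ℝ≥0∞)) ω ∂P := by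
        refine lintegral_tsum fun n => ?_
        exact (Measurable.ennreal_tsum fun s =>
          (measurable_const.indicator (hADm s n))).aemeasurable
    _ = ∑' n : ℕ, ∑' s : ℕ, ∫⁻ ω, Set.indicator (AD s n) (fun _ => (1:ℝ≥0∞)) ω ∂P := by
        refine tsum_congr fun n => ?_
        exact lintegral_tsum fun s => (measurable_const.indicator (hADm s n)).aemeasurable
    _ = ∑' n : ℕ, ∑' s : ℕ, P (AD s n) := by
        refine tsum_congr fun n => tsum_congr fun s => ?_
        exact lintegral_indicator_one (hADm s n)
    _ = ∑' s : ℕ, ∑' n : ℕ, P (AD s n) := ENNReal.tsum_comm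
    _ ≤ ∑' s : ℕ, (if 1 ≤ s then 2 * ENNReal.ofReal (Real.exp (-(δ ^ 2) * (ε * s)))
        else 0) := ENNReal.tsum_le_tsum hscale
    _ ≤ ENNReal.ofReal (8 / (ε * Δ ^ 2)) := hfinal
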